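/- Let (V,d) be a finite metric space with ω : V → ℝ≥0 and f : V → ℝ≥0. For nonempty R ⊆ V let C_ship(R) = ∑_{v∈V} ω(v)·d(v,R), C_facil(R) = ∑_{r∈R} f(r). Let R₁, R₂ ⊆ V be disjoint, R₁ nonempty, and suppose |R₁ ∪ R₂| ≥ 2. Assign each v ∈ V to a nearest server σ(v) ∈ R₁ and set ω'(r) = ∑_{v:σ(v)=r} ω(v). Then C_facil(R₁∪R₂) + max_{r ∈ R₁∪R₂} C_ship((R₁∪R₂)∖{r}) ≤ [C_facil(R₁) + C_ship(R₁)] + [C_facil(R₂) + max_{r ∈ R₁} ω'(r)·d(r,(R₁∪R₂)∖{r})]. -/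
import Mathlib


/-- Distance from a point to a finite set (0 if the set is empty). -/
noncomputable def ddist {V : Type*} [MetricSpace V] (x : V) (S : Finset V) : ℝ :=
  if h : S.Nonempty then S.inf' h (fun s => dist x s) else 0

lemma ddist_nonneg' {V : Type*} [MetricSpace V] (x : V) (S : Finset V) : 0 ≤ ddist x S := by
  unfold ddist
  split
  · exact Finset.le_inf' _ _ (fun s _ => dist_nonneg)
  · exact le_refl 0

lemma ddist_le_dist {V : Type*} [MetricSpace V] (x : V) {S : Finset V} {s : V} (hs : s ∈ S) :
    ddist x S ≤ dist x s := by
  have h : S.Nonempty := ⟨s, hs⟩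
  rw [ddist, dif_pos h]
  exact Finset.inf'_le _ hs

lemma ddist_mono {V : Type*} [MetricSpace V] (x : V) {S T : Finset V} (h : S ⊆ T)
    (hS : S.Nonempty) : ddist x T ≤ ddist x S := by
  have hT : T.Nonempty := hS.mono h
  rw [ddist, ddist, dif_pos hS, dif_pos hT]
  exact Finset.le_inf' _ _ (fun s hs => Finset.inf'_le _ (h hs))

lemma ddist_triangle' {V : Type*} [MetricSpace V] (x y : V) {S : Finset V} (hS : S.Nonempty) :
    ddist x S ≤ dist x y + ddist y S := by
  obtain ⟨s₀, hs₀, hval⟩ := Finset.exists_mem_eq_inf' hS (fun s => dist y s)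
  have : ddist y S = dist y s₀ := by rw [ddist, dif_pos hS, hval]
  rw [this]
  calc ddist x S ≤ dist x s₀ := ddist_le_dist x hs₀
    _ ≤ dist x y + dist y s₀ := dist_triangle x y s₀

/-- Lemma 2.7: the robust fault-tolerant cost of R₁ ∪ R₂ is bounded by
the UFL cost of R₁ plus the concentrated-backup cost of R₂ relative to R₁. -/
theorem stmt_8 {V : Type*} [MetricSpace V] [Fintype V] [DecidableEq V]
    (ω f : V → ℝ) (hω : ∀ v, 0 ≤ ω v) (hf : ∀ v, 0 ≤ f v)
    (R₁ R₂ : Finset V) (hdisj : Disjoint R₁ R₂) (h₁ : R₁.Nonempty)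
    (hcard : 2 ≤ (R₁ ∪ R₂).card) (h₁₂ : (R₁ ∪ R₂).Nonempty)
    (σ : V → V) (hσ : ∀ v, σ v ∈ R₁ ∧ dist v (σ v) = ddist v R₁)
    (ω' : V → ℝ) (hω' : ∀ r, ω' r = ∑ v ∈ Finset.univ.filter (fun v => σ v = r), ω v) :
    (∑ r ∈ R₁ ∪ R₂, f r) +
      (R₁ ∪ R₂).sup' h₁₂ (fun r => ∑ v : V, ω v * ddist v ((R₁ ∪ R₂).erase r)) ≤
    ((∑ r ∈ R₁, f r) + ∑ v : V, ω v * ddist v R₁) +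
      ((∑ r ∈ R₂, f r) +
        R₁.sup' h₁ (fun r => ω' r * ddist r ((R₁ ∪ R₂).erase r))) := by
  have hfsplit : (∑ r ∈ R₁ ∪ R₂, f r) = (∑ r ∈ R₁, f r) + ∑ r ∈ R₂, f r :=
    Finset.sum_union hdisj
  set sup₂ := R₁.sup' h₁ (fun r => ω' r * ddist r ((R₁ ∪ R₂).erase r)) with hsup₂
  have hω'nonneg : ∀ r, 0 ≤ ω' r := fun r => by
    rw [hω' r]; exact Finset.sum_nonneg (fun v _ => hω v)
  have hsup₂nonneg : 0 ≤ sup₂ := by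
    obtain ⟨r, hr⟩ := h₁
    calc (0:ℝ) ≤ ω' r * ddist r ((R₁ ∪ R₂).erase r) :=
          mul_nonneg (hω'nonneg r) (ddist_nonneg' _ _)
      _ ≤ sup₂ := Finset.le_sup' (fun r => ω' r * ddist r ((R₁ ∪ R₂).erase r)) hr
  -- erase is nonempty
  have herase : ∀ r, ((R₁ ∪ R₂).erase r).Nonempty := by
    intro r
    obtain ⟨a, ha, b, hb, hab⟩ := Finset.one_lt_card.mp hcard
    by_cases hra : a = r
    · exact ⟨b, Finset.mem_erase.mpr ⟨by rw [← hra]; exact fun h => hab h.symm, hb⟩⟩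
    · exact ⟨a, Finset.mem_erase.mpr ⟨hra, ha⟩⟩
  have key : ∀ r ∈ R₁ ∪ R₂,
      (∑ v : V, ω v * ddist v ((R₁ ∪ R₂).erase r)) ≤
        (∑ v : V, ω v * ddist v R₁) + sup₂ := by
    intro r hr
    set A := (R₁ ∪ R₂).erase r with hA
    by_cases hrR₁ : r ∈ R₁
    · -- bound each term
      have hstep : ∀ v : V, ω v * ddist v A ≤
          ω v * ddist v R₁ + (if σ v = r then ω v * ddist r A else 0) := by
        intro v
        obtain ⟨hσmem, hσdist⟩ := hσ v
        by_cases hvr : σ v = r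
        · rw [if_pos hvr]
          have h1 : ddist v A ≤ ddist v R₁ + ddist r A := by
            calc ddist v A ≤ dist v (σ v) + ddist (σ v) A :=
                ddist_triangle' v (σ v) (herase r)
              _ = ddist v R₁ + ddist r A := by rw [hσdist, hvr]
          calc ω v * ddist v A ≤ ω v * (ddist v R₁ + ddist r A) :=
              mul_le_mul_of_nonneg_left h1 (hω v)
            _ = ω v * ddist v R₁ + ω v * ddist r A := mul_add _ _ _
        · rw [if_neg hvr, add_zero]
          have hmemA : σ v ∈ A := Finset.mem_erase.mpr ⟨hvr, Finset.mem_union_left _ hσmem⟩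
          have : ddist v A ≤ ddist v R₁ := by
            rw [← hσdist]; exact ddist_le_dist v hmemA
          exact mul_le_mul_of_nonneg_left this (hω v)
      calc (∑ v : V, ω v * ddist v A)
          ≤ ∑ v : V, (ω v * ddist v R₁ + (if σ v = r then ω v * ddist r A else 0)) :=
            Finset.sum_le_sum (fun v _ => hstep v)
        _ = (∑ v : V, ω v * ddist v R₁) +
              ∑ v : V, (if σ v = r then ω v * ddist r A else 0) := Finset.sum_add_distrib
        _ = (∑ v : V, ω v * ddist v R₁) + ω' r * ddist r A := by
            congr 1
            rw [hω' r, Finset.sum_mul, ← Finset.sum_filter]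
        _ ≤ (∑ v : V, ω v * ddist v R₁) + sup₂ := by
            have := Finset.le_sup' (fun r => ω' r * ddist r ((R₁ ∪ R₂).erase r)) hrR₁
            linarith
    · -- r ∉ R₁ : R₁ ⊆ A
      have hsub : R₁ ⊆ A := by
        intro s hs
        exact Finset.mem_erase.mpr ⟨fun h => hrR₁ (h ▸ hs), Finset.mem_union_left _ hs⟩
      have : (∑ v : V, ω v * ddist v A) ≤ ∑ v : V, ω v * ddist v R₁ :=
        Finset.sum_le_sum (fun v _ =>
          mul_le_mul_of_nonneg_left (ddist_mono v hsub h₁) (hω v))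
      linarith
  have hsup : (R₁ ∪ R₂).sup' h₁₂ (fun r => ∑ v : V, ω v * ddist v ((R₁ ∪ R₂).erase r)) ≤
      (∑ v : V, ω v * ddist v R₁) + sup₂ := Finset.sup'_le _ _ key
  linarith
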